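/- If a, b, c are all even with t = min(v₂(a), v₂(b), v₂(c)) ≤ n, then the number of solutions x ∈ ℤ/2^nℤ of a·x² + b·x + c ≡ 0 (mod 2^n) equals 2^t times the number of solutions y ∈ ℤ/2^(n−t)ℤ of (a/2^t)·y² + (b/2^t)·y + (c/2^t) ≡ 0 (mod 2^(n−t)). -/

import Mathlib

theorem stmt_1 (n : ℕ) (hn : 1 ≤ n) (a b c : ℤ)
    (ha : 2 ∣ a) (hb : 2 ∣ b) (hc : 2 ∣ c)
    (t : ℕ) (ht : t = min (padicValInt 2 a) (min (padicValInt 2 b) (padicValInt 2 c)))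
    (htn : t ≤ n)
    (a' b' c' : ℤ) (ha' : a = 2 ^ t * a') (hb' : b = 2 ^ t * b') (hc' : c = 2 ^ t * c') :
    Nat.card {x : ZMod (2 ^ n) // (a : ZMod (2 ^ n)) * x ^ 2 + b * x + c = 0} =
      2 ^ t * Nat.card {y : ZMod (2 ^ (n - t)) //
        (a' : ZMod (2 ^ (n - t))) * y ^ 2 + b' * y + c' = 0} := by
  classical
  set m := n - t with hm
  have hnmt : n = m + t := by omega
  have hdvd : (2:ℕ)^m ∣ 2^n := pow_dvd_pow 2 (Nat.sub_le n t)
  set f : ZMod (2^n) →+* ZMod (2^m) := ZMod.castHom hdvd _ with hf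
  have hfint : ∀ k : ℤ, f (k : ZMod (2^n)) = (k : ZMod (2^m)) := fun k => map_intCast f k
  have fsurj : Function.Surjective f := by
    intro y
    obtain ⟨k, rfl⟩ := ZMod.intCast_surjective y
    exact ⟨(k : ZMod (2^n)), hfint k⟩
  -- key: 2^t * w = 0 iff f w = 0
  have key0 : ∀ w : ZMod (2^n), (2:ZMod (2^n))^t * w = 0 ↔ f w = 0 := by
    intro w
    obtain ⟨k, rfl⟩ := ZMod.intCast_surjective w
    rw [hfint]
    have h1 : ((2:ZMod (2^n)))^t * (k : ZMod (2^n)) = ((2^t * k : ℤ) : ZMod (2^n)) := by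
      push_cast; ring
    rw [h1, ZMod.intCast_zmod_eq_zero_iff_dvd, ZMod.intCast_zmod_eq_zero_iff_dvd]
    constructor
    · rintro ⟨j, hj⟩
      refine ⟨j, ?_⟩
      push_cast at hj ⊢
      rw [hnmt, pow_add] at hj
      have h2t : ((2:ℤ)^t) ≠ 0 := by positivity
      exact mul_left_cancel₀ h2t (by rw [hj]; ring)
    · rintro ⟨j, hj⟩
      refine ⟨j, ?_⟩
      push_cast at hj ⊢
      rw [hnmt, pow_add, hj]
      ring
  have key : ∀ x : ZMod (2^n), ((a : ZMod (2^n)) * x ^ 2 + b * x + c = 0) ↔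
      ((a' : ZMod (2^m)) * (f x) ^ 2 + b' * (f x) + c' = 0) := by
    intro x
    have hrw : (a : ZMod (2^n)) * x ^ 2 + b * x + c
        = (2:ZMod (2^n))^t * ((a' : ZMod (2^n)) * x ^ 2 + b' * x + c') := by
      rw [ha', hb', hc']; push_cast; ring
    rw [hrw, key0]
    have : f ((a' : ZMod (2^n)) * x ^ 2 + b' * x + c')
        = (a' : ZMod (2^m)) * (f x) ^ 2 + b' * (f x) + c' := by
      simp [map_add, map_mul, map_pow, hfint]
    rw [this]
  -- fiber cardinalities
  set e := (Finset.univ.filter (fun x : ZMod (2^n) => f x = 0)).card with he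
  have hfiber : ∀ y : ZMod (2^m),
      (Finset.univ.filter (fun x : ZMod (2^n) => f x = y)).card = e := by
    intro y
    obtain ⟨x₀, hx₀⟩ := fsurj y
    rw [he]
    apply Finset.card_bij' (fun x _ => x - x₀) (fun x _ => x + x₀)
    · intro x hx
      simp only [Finset.mem_filter, Finset.mem_univ, true_and] at hx ⊢
      rw [map_sub, hx, hx₀, sub_self]
    · intro x hx
      simp only [Finset.mem_filter, Finset.mem_univ, true_and] at hx ⊢
      rw [map_add, hx, hx₀, zero_add]
    · intro x _; simp
    · intro x _; simp
  have hcount : 2^n = 2^m * e := by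
    have h1 : Fintype.card (ZMod (2^n)) = 2^n := ZMod.card _
    have h2 : (Finset.univ : Finset (ZMod (2^n))).card =
        ∑ y ∈ (Finset.univ : Finset (ZMod (2^m))),
          (Finset.univ.filter (fun x : ZMod (2^n) => f x = y)).card := by
      apply Finset.card_eq_sum_card_fiberwise
      intro x _; exact Finset.mem_univ _
    rw [Finset.card_univ, h1] at h2
    rw [h2]
    rw [Finset.sum_congr rfl (fun y _ => hfiber y), Finset.sum_const, Finset.card_univ,
      ZMod.card, smul_eq_mul]
  have he_eq : e = 2^t := by
    have h2 : (2:ℕ)^n = 2^m * 2^t := by rw [hnmt, pow_add]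
    have hpos : 0 < (2:ℕ)^m := by positivity
    exact Nat.eq_of_mul_eq_mul_left hpos (by rw [← hcount, ← h2])
  -- main count
  rw [Nat.card_eq_fintype_card, Nat.card_eq_fintype_card, Fintype.card_subtype,
    Fintype.card_subtype]
  have hfilt : (Finset.univ.filter
        (fun x : ZMod (2^n) => (a : ZMod (2^n)) * x ^ 2 + b * x + c = 0))
      = Finset.univ.filter
        (fun x : ZMod (2^n) => (a' : ZMod (2^m)) * (f x) ^ 2 + b' * (f x) + c' = 0) := by
    apply Finset.filter_congr
    intro x _
    simpa using key x
  rw [hfilt]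
  set Q : ZMod (2^m) → Prop := fun y => (a' : ZMod (2^m)) * y ^ 2 + b' * y + c' = 0 with hQ
  have hsum : (Finset.univ.filter (fun x : ZMod (2^n) => Q (f x))).card
      = ∑ y ∈ Finset.univ.filter Q,
        ((Finset.univ.filter (fun x : ZMod (2^n) => Q (f x))).filter
          (fun x => f x = y)).card := by
    apply Finset.card_eq_sum_card_fiberwise
    intro x hx
    simp only [Finset.mem_coe, Finset.mem_filter, Finset.mem_univ, true_and] at hx ⊢
    exact hx
  rw [hsum]
  have hterm : ∀ y ∈ Finset.univ.filter Q,
      ((Finset.univ.filter (fun x : ZMod (2^n) => Q (f x))).filter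
        (fun x => f x = y)).card = 2^t := by
    intro y hy
    simp only [Finset.mem_filter, Finset.mem_univ, true_and] at hy
    rw [Finset.filter_filter]
    have : (Finset.univ.filter (fun x : ZMod (2^n) => Q (f x) ∧ f x = y))
        = Finset.univ.filter (fun x : ZMod (2^n) => f x = y) := by
      apply Finset.filter_congr
      intro x _
      constructor
      · exact fun h => h.2
      · exact fun h => ⟨h ▸ hy, h⟩
    rw [this, hfiber, he_eq]
  rw [Finset.sum_congr rfl hterm, Finset.sum_const, smul_eq_mul, mul_comm]
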